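/- (Claim 3, empty case) Let d ≥ 0, k ≥ 0, m ≥ 0 and n₁ ≥ 1, n₂ ≥ 1 be integers. Define S = max(0, v(d, k+1, n₁)) + n₁·max(0, v(k−1, m, n₂)) + max(0, max(0, v(d, k, n₁)) − max(0, v(d, k+1, n₁)) + n₁·(max(0, v(k, m, n₂)) − max(0, v(k−1, m, n₂))) − n₁(k+1)). If all three inequalities hold: (a) v(d, k+1, n₁) ≤ 0; (b) v(k−1, m, n₂) ≤ 0; (c) d(d+3)/2 + 1 − n₁n₂·m(m+1)/2 ≤ 0; then S = 0. -/
import Mathlib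


/-- The virtual dimension `v(δ, μ, ν) = δ(δ+3)/2 + 1 − ν·μ(μ+1)/2` (as a rational
number) of the vector space associated with the homogeneous linear system
`L_δ(μ^ν)`. -/
def vdim (δ : ℤ) (μ ν : ℕ) : ℚ :=
  (δ : ℚ) * ((δ : ℚ) + 3) / 2 + 1 - (ν : ℚ) * ((μ : ℚ) * ((μ : ℚ) + 1)) / 2

/-- **Claim 3, empty case.** The dimension `S` of the limit system `L₀`
(kernels plus intersection of images) vanishes when all of the inequalities
(a), (b), (c) hold. -/
theorem claim3_empty (d k m n₁ n₂ : ℕ) (hn₁ : 1 ≤ n₁) (hn₂ : 1 ≤ n₂)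
    (S : ℚ)
    (hS : S = max 0 (vdim d (k + 1) n₁) + (n₁ : ℚ) * max 0 (vdim ((k : ℤ) - 1) m n₂)
      + max 0 (max 0 (vdim d k n₁) - max 0 (vdim d (k + 1) n₁)
          + (n₁ : ℚ) * (max 0 (vdim k m n₂) - max 0 (vdim ((k : ℤ) - 1) m n₂))
          - (n₁ : ℚ) * ((k : ℚ) + 1)))
    (ha : vdim d (k + 1) n₁ ≤ 0)
    (hb : vdim ((k : ℤ) - 1) m n₂ ≤ 0)
    (hc : (d : ℚ) * ((d : ℚ) + 3) / 2 + 1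
      - (n₁ : ℚ) * (n₂ : ℚ) * ((m : ℚ) * ((m : ℚ) + 1)) / 2 ≤ 0) :
    S = 0 := by
  have hn₁' : (1 : ℚ) ≤ (n₁ : ℚ) := by exact_mod_cast hn₁
  rw [hS, max_eq_left ha, max_eq_left hb]
  have key : max 0 (vdim d k n₁) - 0 + (n₁ : ℚ) * (max 0 (vdim k m n₂) - 0)
      - (n₁ : ℚ) * ((k : ℚ) + 1) ≤ 0 := by
    rcases le_or_gt (vdim d k n₁) 0 with hA | hA <;>
    rcases le_or_gt (vdim k m n₂) 0 with hB | hB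
    · rw [max_eq_left hA, max_eq_left hB]; nlinarith
    · rw [max_eq_left hA, max_eq_right hB.le]
      simp only [vdim] at hb hB ⊢
      push_cast at hb hB ⊢
      nlinarith
    · rw [max_eq_right hA.le, max_eq_left hB]
      simp only [vdim] at ha hA ⊢
      push_cast at ha hA ⊢
      nlinarith
    · rw [max_eq_right hA.le, max_eq_right hB.le]
      simp only [vdim] at hA hB ⊢
      push_cast at hA hB ⊢
      nlinarith [mul_le_mul_of_nonneg_left hb (by linarith : (0:ℚ) ≤ (n₁:ℚ))]
  rw [max_eq_left key]
  ring
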